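/- arXiv:2402.06641 — 6 statements merged into one kernel-verified Lean document; each statement's English description precedes it below -/
import Mathlib

section
/- Fix a real number θ with 0 < θ < 1. Then, as N → ∞ through the positive integers, 1 − 1/(2N) + sin((2N−1)θπ/N)/(2N·sin(θπ/N)) = 1 + sin(2πθ)/(2πθ) − (1 + cos(2πθ))/(2N) − πθ·sin(2πθ)/(6N²) + O(N^{−3}); that is, the difference between the left-hand side and the first four terms on the right is O(N^{−3}) as N → ∞, with implied constant allowed to depend on θ. -/
open Real Filter Asymptotics

lemma cot_key {x : ℝ} (hx0 : 0 < x) (hx1 : x ≤ 1) :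
    |Real.cos x / Real.sin x - 1 / x + x / 3| ≤ x ^ 2 := by
  have hxabs : |x| ≤ 1 := by rw [abs_of_pos hx0]; exact hx1
  have hs := Real.sin_bound hxabs
  have hc := Real.cos_bound hxabs
  rw [abs_of_pos hx0] at hs hc
  have hsinpos : 0 < Real.sin x := by
    apply Real.sin_pos_of_pos_of_lt_pi hx0
    linarith [Real.pi_gt_three]
  -- lower bound on sin
  have hx3 : x ^ 3 ≤ x := by nlinarith
  have hx4 : x ^ 4 ≤ x := by nlinarith
  have hsinlb : x / 2 ≤ Real.sin x := by
    have h1 : Real.sin x - (x - x ^ 3 / 6) ≥ -(x ^ 5 / 100) := neg_le_of_abs_le hs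
    nlinarith [mul_le_mul_of_nonneg_left hx1 (pow_nonneg hx0.le 4)]
  have hden : x ^ 2 / 2 ≤ x * Real.sin x := by nlinarith
  have hid : Real.cos x / Real.sin x - 1 / x + x / 3
      = (x * Real.cos x - Real.sin x + x ^ 2 / 3 * Real.sin x) / (x * Real.sin x) := by
    field_simp
  rw [hid, abs_div, abs_of_pos (by nlinarith : (0:ℝ) < x * Real.sin x)]
  rw [div_le_iff₀ (by nlinarith : (0:ℝ) < x * Real.sin x)]
  -- numerator bound
  have hec : |Real.cos x - (1 - x ^ 2 / 2)| ≤ x ^ 4 * (5 / 96) := hc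
  have hes : |Real.sin x - (x - x ^ 3 / 6)| ≤ x ^ 4 * (5 / 96) :=
    le_trans hs (by nlinarith [mul_le_mul_of_nonneg_left hx1 (pow_nonneg hx0.le 4), pow_nonneg hx0.le 4])
  set ec := Real.cos x - (1 - x ^ 2 / 2) with hecdef
  set es := Real.sin x - (x - x ^ 3 / 6) with hesdef
  have hnum : x * Real.cos x - Real.sin x + x ^ 2 / 3 * Real.sin x
      = x * ec + (x ^ 2 / 3 - 1) * es - x ^ 5 / 18 := by
    rw [hecdef, hesdef]; ring
  rw [hnum]
  have h1 : |x * ec + (x ^ 2 / 3 - 1) * es - x ^ 5 / 18|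
      ≤ x * |ec| + |x ^ 2 / 3 - 1| * |es| + x ^ 5 / 18 := by
    calc |x * ec + (x ^ 2 / 3 - 1) * es - x ^ 5 / 18|
        ≤ |x * ec + (x ^ 2 / 3 - 1) * es| + |x ^ 5 / 18| := abs_sub _ _
      _ ≤ |x * ec| + |(x ^ 2 / 3 - 1) * es| + |x ^ 5 / 18| := by
          gcongr; exact abs_add_le _ _
      _ = x * |ec| + |x ^ 2 / 3 - 1| * |es| + x ^ 5 / 18 := by
          rw [abs_mul, abs_mul, abs_of_pos hx0, abs_of_pos (by positivity : (0:ℝ) < x ^ 5 / 18)]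
  have habs1 : |x ^ 2 / 3 - 1| ≤ 1 := by
    rw [abs_le]
    constructor
    · nlinarith [sq_nonneg x]
    · nlinarith [sq_nonneg x]
  have hx5 : x ^ 5 ≤ x ^ 4 := by
    calc x ^ 5 = x ^ 4 * x := by ring
    _ ≤ x ^ 4 * 1 := by gcongr
    _ = x ^ 4 := mul_one _
  have ha : x * |ec| ≤ x ^ 4 * (5 / 96) := by
    calc x * |ec| ≤ 1 * (x ^ 4 * (5 / 96)) := mul_le_mul hx1 hec (abs_nonneg _) zero_le_one
      _ = x ^ 4 * (5 / 96) := one_mul _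
  have hb : |x ^ 2 / 3 - 1| * |es| ≤ x ^ 4 * (5 / 96) := by
    calc |x ^ 2 / 3 - 1| * |es| ≤ 1 * (x ^ 4 * (5 / 96)) :=
          mul_le_mul habs1 hes (abs_nonneg _) zero_le_one
      _ = x ^ 4 * (5 / 96) := one_mul _
  calc |x * ec + (x ^ 2 / 3 - 1) * es - x ^ 5 / 18|
      ≤ x * |ec| + |x ^ 2 / 3 - 1| * |es| + x ^ 5 / 18 := h1
    _ ≤ x ^ 4 * (5 / 96) + x ^ 4 * (5 / 96) + x ^ 4 / 18 := by linarith
    _ ≤ x ^ 2 * (x ^ 2 / 2) := by nlinarith [pow_nonneg hx0.le 4]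
    _ ≤ x ^ 2 * (x * Real.sin x) := by
        have := sq_nonneg x
        nlinarith

/-- Large-`N` expansion of the scaled one-level density kernel of `SO(2N)`. -/
theorem so_even_kernel_expansion (θ : ℝ) (h0 : 0 < θ) (h1 : θ < 1) :
    (fun N : ℕ =>
      (1 - 1 / (2 * (N : ℝ))
        + Real.sin ((2 * (N : ℝ) - 1) * θ * π / N) / (2 * (N : ℝ) * Real.sin (θ * π / N)))
      - (1 + Real.sin (2 * π * θ) / (2 * π * θ)
          - (1 + Real.cos (2 * π * θ)) / (2 * (N : ℝ))
          - π * θ * Real.sin (2 * π * θ) / (6 * (N : ℝ) ^ 2)))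
      =O[atTop] (fun N : ℕ => 1 / (N : ℝ) ^ 3) := by
  rw [isBigO_iff]
  refine ⟨π ^ 2, ?_⟩
  filter_upwards [eventually_ge_atTop 4] with N hN
  have hNpos : (0 : ℝ) < N := by positivity
  have hNne : (N : ℝ) ≠ 0 := hNpos.ne'
  set x : ℝ := θ * π / N with hxdef
  have hpi := Real.pi_pos
  have hx0 : 0 < x := by positivity
  have hx1 : x ≤ 1 := by
    rw [hxdef, div_le_one hNpos]
    have : (4 : ℝ) ≤ N := by exact_mod_cast hN
    nlinarith [Real.pi_lt_d2]
  have hsinpos : 0 < Real.sin x := by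
    apply Real.sin_pos_of_pos_of_lt_pi hx0
    linarith [Real.pi_gt_three]
  -- rewrite the sine of the big angle
  have hang : (2 * (N : ℝ) - 1) * θ * π / N = 2 * π * θ - x := by
    rw [hxdef]; field_simp
  have hsin : Real.sin ((2 * (N : ℝ) - 1) * θ * π / N)
      = Real.sin (2 * π * θ) * Real.cos x - Real.cos (2 * π * θ) * Real.sin x := by
    rw [hang, Real.sin_sub]
  -- main identity
  have hkey :
      (1 - 1 / (2 * (N : ℝ))
        + Real.sin ((2 * (N : ℝ) - 1) * θ * π / N) / (2 * (N : ℝ) * Real.sin (θ * π / N)))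
      - (1 + Real.sin (2 * π * θ) / (2 * π * θ)
          - (1 + Real.cos (2 * π * θ)) / (2 * (N : ℝ))
          - π * θ * Real.sin (2 * π * θ) / (6 * (N : ℝ) ^ 2))
      = Real.sin (2 * π * θ) * ((Real.cos x / Real.sin x - 1 / x + x / 3) / (2 * N)) := by
    rw [hsin]
    have hsx : Real.sin (θ * π / N) = Real.sin x := by rw [hxdef]
    rw [hsx]
    rw [hxdef]
    have hsn : Real.sin (π * θ * (N:ℝ)⁻¹) * (Real.sin (π * θ * (N:ℝ)⁻¹))⁻¹ = 1 := by
      apply mul_inv_cancel₀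
      rw [show π * θ * (N:ℝ)⁻¹ = x by rw [hxdef]; ring]; exact hsinpos.ne'
    field_simp
    linear_combination (norm := ring_nf) (-((N:ℝ) * π * θ * Real.cos (π * θ * 2) * 18)) * hsn
  rw [hkey]
  have hbound := cot_key hx0 hx1
  have h2N : (0 : ℝ) < 2 * N := by positivity
  rw [Real.norm_eq_abs, abs_mul, abs_div, abs_of_pos h2N]
  have hsinle : |Real.sin (2 * π * θ)| ≤ 1 := Real.abs_sin_le_one _
  have hx2 : x ^ 2 ≤ π ^ 2 / N ^ 2 := by
    rw [hxdef, div_pow]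
    rw [div_le_div_iff₀ (by positivity) (by positivity)]
    have hθ2 : θ ^ 2 ≤ 1 := by nlinarith
    nlinarith [mul_nonneg (by nlinarith : (0:ℝ) ≤ 1 - θ ^ 2) (sq_nonneg (π * (N : ℝ)))]
  calc |Real.sin (2 * π * θ)| * (|Real.cos x / Real.sin x - 1 / x + x / 3| / (2 * N))
      ≤ 1 * (x ^ 2 / (2 * N)) := by gcongr
    _ = x ^ 2 / (2 * N) := one_mul _
    _ ≤ (π ^ 2 / N ^ 2) / (2 * N) := by gcongr
    _ ≤ π ^ 2 * ‖1 / (N : ℝ) ^ 3‖ := by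
        rw [Real.norm_eq_abs, abs_of_pos (by positivity : (0:ℝ) < 1 / (N:ℝ) ^ 3)]
        rw [div_div]
        rw [div_le_iff₀ (by positivity)]
        have : π ^ 2 * (1 / (N:ℝ) ^ 3) * (N ^ 2 * (2 * N)) = 2 * π ^ 2 := by
          field_simp
        rw [this]
        nlinarith [sq_nonneg π]
end

section
/- Fix a real number θ with 0 < θ < 1. Then, as N → ∞ through the positive integers, 1 − 1/(2N+1) − sin(4πθN/(2N+1))/((2N+1)·sin(2πθ/(2N+1))) = 1 − sin(2πθ)/(2πθ) − (1 − cos(2πθ))/(2N+1) + 2πθ·sin(2πθ)/(3(2N+1)²) + O(N^{−3}); that is, the difference between the left-hand side and the first four terms on the right is O(N^{−3}) as N → ∞, with implied constant allowed to depend on θ. -/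
set_option maxHeartbeats 800000


open Real Filter Asymptotics

lemma aux_cubic_bound (x : ℝ) (hx0 : 0 < x) (hx1 : x ≤ 1) :
    |x * Real.cos x - Real.sin x + x ^ 2 * Real.sin x / 3| ≤ x ^ 4 := by
  have hax : |x| ≤ 1 := by rw [abs_of_pos hx0]; exact hx1
  have hc := Real.cos_bound hax
  have hs := Real.sin_bound hax
  rw [abs_of_pos hx0] at hc hs
  set e1 := Real.cos x - (1 - x ^ 2 / 2) with he1
  set e2 := Real.sin x - (x - x ^ 3 / 6) with he2
  have hcos : Real.cos x = 1 - x ^ 2 / 2 + e1 := by rw [he1]; ring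
  have hsin : Real.sin x = x - x ^ 3 / 6 + e2 := by rw [he2]; ring
  have key : x * Real.cos x - Real.sin x + x ^ 2 * Real.sin x / 3
      = x * e1 - e2 + x ^ 2 * e2 / 3 - x ^ 5 / 18 := by
    rw [hcos, hsin]; ring
  rw [key]
  have a1 : |x * e1| = x * |e1| := by rw [abs_mul, abs_of_pos hx0]
  have a2 : |x ^ 2 * e2 / 3| = x ^ 2 * |e2| / 3 := by
    rw [abs_div, abs_mul, abs_pow, abs_of_pos hx0]; norm_num
  have a3 : |x ^ 5 / 18| = x ^ 5 / 18 := by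
    rw [abs_of_nonneg]; positivity
  have h1 : |x * e1 - e2 + x ^ 2 * e2 / 3 - x ^ 5 / 18|
      ≤ x * |e1| + |e2| + x ^ 2 * |e2| / 3 + x ^ 5 / 18 := by
    have t1 := abs_sub (x * e1 - e2 + x ^ 2 * e2 / 3) (x ^ 5 / 18)
    have t2 := abs_add_le (x * e1 - e2) (x ^ 2 * e2 / 3)
    have t3 := abs_sub (x * e1) e2
    rw [a3] at t1
    rw [a2] at t2
    rw [a1] at t3
    linarith
  refine h1.trans ?_
  have hx4 : (0:ℝ) ≤ x ^ 4 := by positivity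
  have hx5 : x ^ 5 ≤ x ^ 4 := by
    nlinarith [mul_nonneg hx4 (sub_nonneg.2 hx1)]
  have he1' : x * |e1| ≤ x ^ 4 * (5 / 96) := by
    have : x * |e1| ≤ 1 * (x ^ 4 * (5 / 96)) :=
      mul_le_mul hx1 hc (abs_nonneg _) zero_le_one
    linarith
  have he2' : x ^ 2 * |e2| / 3 ≤ x ^ 4 * (5 / 288) := by
    have hx2 : x ^ 2 ≤ 1 := by nlinarith
    have : x ^ 2 * |e2| ≤ 1 * (x ^ 4 * (5 / 96)) :=
      mul_le_mul hx2 (hs.trans (by linarith)) (abs_nonneg _) zero_le_one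
    linarith
  linarith

/-- Large-`N` expansion of the scaled one-level density kernel of `SO(2N+1)`. -/
theorem so_odd_kernel_expansion (θ : ℝ) (h0 : 0 < θ) (h1 : θ < 1) :
    (fun N : ℕ =>
      (1 - 1 / (2 * (N : ℝ) + 1)
        - Real.sin (4 * π * θ * N / (2 * (N : ℝ) + 1))
            / ((2 * (N : ℝ) + 1) * Real.sin (2 * π * θ / (2 * (N : ℝ) + 1))))
      - (1 - Real.sin (2 * π * θ) / (2 * π * θ)
          - (1 - Real.cos (2 * π * θ)) / (2 * (N : ℝ) + 1)
          + 2 * π * θ * Real.sin (2 * π * θ) / (3 * (2 * (N : ℝ) + 1) ^ 2)))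
      =O[atTop] (fun N : ℕ => 1 / (N : ℝ) ^ 3) := by
  set a : ℝ := 2 * π * θ with ha
  have ha0 : 0 < a := by positivity
  have ha2pi : a < 2 * π := by
    have := Real.pi_pos
    nlinarith
  rw [isBigO_iff]
  refine ⟨a ^ 2, ?_⟩
  filter_upwards [eventually_ge_atTop 3] with N hN
  have hN3 : (3 : ℝ) ≤ (N : ℝ) := by exact_mod_cast hN
  set M : ℝ := 2 * (N : ℝ) + 1 with hM
  have hM7 : (7 : ℝ) ≤ M := by rw [hM]; linarith
  have hM0 : (0 : ℝ) < M := by linarith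
  set x : ℝ := a / M with hx
  have hx0 : 0 < x := by positivity
  have hx1 : x ≤ 1 := by
    rw [hx, div_le_one hM0]
    have : 2 * π < 7 := by nlinarith [Real.pi_lt_d2]
    linarith
  have hsinx : 0 < Real.sin x := by
    apply Real.sin_pos_of_pos_of_lt_pi hx0
    have := Real.pi_gt_three
    linarith
  have hsinx' : Real.sin x ≠ 0 := ne_of_gt hsinx
  have hxne : x ≠ 0 := ne_of_gt hx0
  have hMne : M ≠ 0 := ne_of_gt hM0
  have hane : a ≠ 0 := ne_of_gt ha0
  have hMx : a = x * M := by rw [hx]; field_simp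
  have harg : 4 * π * θ * N / (2 * (N : ℝ) + 1) = a - x := by
    rw [hx, ha, hM]
    field_simp
    ring
  have hid : (1 - 1 / (2 * (N : ℝ) + 1)
        - Real.sin (4 * π * θ * N / (2 * (N : ℝ) + 1))
            / ((2 * (N : ℝ) + 1) * Real.sin (2 * π * θ / (2 * (N : ℝ) + 1))))
      - (1 - Real.sin (2 * π * θ) / (2 * π * θ)
          - (1 - Real.cos (2 * π * θ)) / (2 * (N : ℝ) + 1)
          + 2 * π * θ * Real.sin (2 * π * θ) / (3 * (2 * (N : ℝ) + 1) ^ 2))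
      = -(Real.sin a * (x * Real.cos x - Real.sin x + x ^ 2 * Real.sin x / 3))
          / (a * Real.sin x) := by
    rw [harg, Real.sin_sub]
    have hxM : 2 * π * θ / (2 * (N : ℝ) + 1) = x := by rw [hx, ha, hM]
    rw [hxM]
    rw [show (2 * (N : ℝ) + 1) = M from hM.symm, show (2 * π * θ : ℝ) = a from ha.symm]
    rw [hMx]
    field_simp
    ring
  rw [hid]
  have hcube := aux_cubic_bound x hx0 hx1
  have hsinhalf : x / 2 ≤ Real.sin x := by
    have := Real.sin_gt_sub_cube hx0
    nlinarith
  have habs : |(-(Real.sin a * (x * Real.cos x - Real.sin x + x ^ 2 * Real.sin x / 3)))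
      / (a * Real.sin x)| ≤ 2 * x ^ 3 / a := by
    rw [abs_div, abs_neg, abs_mul, abs_mul]
    rw [abs_of_pos ha0, abs_of_pos hsinx]
    have hsa : |Real.sin a| ≤ 1 := Real.abs_sin_le_one a
    have hnum : |Real.sin a| * |x * Real.cos x - Real.sin x + x ^ 2 * Real.sin x / 3|
        ≤ x ^ 4 := by
      have := mul_le_mul hsa hcube (abs_nonneg _) zero_le_one
      linarith
    rw [div_le_div_iff₀ (by positivity) ha0]
    calc |Real.sin a| * |x * Real.cos x - Real.sin x + x ^ 2 * Real.sin x / 3| * a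
        ≤ x ^ 4 * a := mul_le_mul_of_nonneg_right hnum (le_of_lt ha0)
      _ ≤ 2 * x ^ 3 * (a * Real.sin x) := by
          nlinarith [mul_nonneg (mul_nonneg (by positivity : (0:ℝ) ≤ 2 * x ^ 3) ha0.le)
            (sub_nonneg.2 hsinhalf)]
  refine habs.trans ?_
  have hN0 : (0 : ℝ) < (N : ℝ) := by linarith
  have hfinal : 2 * x ^ 3 / a ≤ a ^ 2 / (N : ℝ) ^ 3 := by
    rw [div_le_div_iff₀ ha0 (by positivity)]
    have hM3 : 8 * (N : ℝ) ^ 3 ≤ M ^ 3 := by rw [hM]; nlinarith [sq_nonneg ((N:ℝ)), hN0.le, mul_pos hN0 hN0]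
    have hx3 : x ^ 3 * M ^ 3 = a ^ 3 := by rw [hMx]; ring
    have h1 : (N : ℝ) ^ 3 ≤ M ^ 3 / 8 := by nlinarith [sq_nonneg ((N:ℝ)), Nat.cast_nonneg (α := ℝ) N]
    calc 2 * x ^ 3 * (N : ℝ) ^ 3 ≤ 2 * x ^ 3 * (M ^ 3 / 8) :=
          mul_le_mul_of_nonneg_left h1 (by positivity)
      _ = x ^ 3 * M ^ 3 / 4 := by ring
      _ = a ^ 3 / 4 := by rw [hx3]
      _ ≤ a ^ 3 := by linarith [pow_pos ha0 3]
      _ = a ^ 2 * a := by ring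
  refine hfinal.trans ?_
  rw [Real.norm_eq_abs, abs_of_pos (by positivity : (0:ℝ) < 1 / (N : ℝ) ^ 3), mul_one_div]
end

section
/- Fix a real number θ with 0 < θ < 1. Then, as N → ∞ through the positive integers, 1 + 1/(2N) − sin((2N+1)θπ/N)/(2N·sin(θπ/N)) = 1 − sin(2πθ)/(2πθ) + (1 − cos(2πθ))/(2N) + πθ·sin(2πθ)/(6N²) + O(N^{−3}); that is, the difference between the left-hand side and the first four terms on the right is O(N^{−3}) as N → ∞, with implied constant allowed to depend on θ. -/
open Real Filter Asymptotics

lemma keyA (x : ℝ) (hx : 0 < x) (hx1 : x ≤ 1) :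
    |x * Real.cos x - (1 - x ^ 2 / 3) * Real.sin x| ≤ x ^ 4 := by
  have hax : |x| ≤ 1 := by rwa [abs_of_pos hx]
  have hc := Real.cos_bound hax
  have hs := Real.sin_bound hax
  rw [abs_of_pos hx, abs_le] at hc hs
  rw [abs_le]
  have h2 : x ^ 2 ≤ 1 := pow_le_one₀ hx.le hx1
  have h4 : x ^ 4 ≤ 1 := pow_le_one₀ hx.le hx1
  have h5 : x ^ 5 ≤ x ^ 4 := by nlinarith [pow_pos hx 4]
  constructor <;> nlinarith [pow_pos hx 4, pow_pos hx 2, mul_pos hx (pow_pos hx 4)]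

/-- Large-`N` expansion of the scaled one-level density kernel of `USp(2N)`. -/
theorem usp_kernel_expansion (θ : ℝ) (h0 : 0 < θ) (h1 : θ < 1) :
    (fun N : ℕ =>
      (1 + 1 / (2 * (N : ℝ))
        - Real.sin ((2 * (N : ℝ) + 1) * θ * π / N) / (2 * (N : ℝ) * Real.sin (θ * π / N)))
      - (1 - Real.sin (2 * π * θ) / (2 * π * θ)
          + (1 - Real.cos (2 * π * θ)) / (2 * (N : ℝ))
          + π * θ * Real.sin (2 * π * θ) / (6 * (N : ℝ) ^ 2)))
      =O[atTop] (fun N : ℕ => 1 / (N : ℝ) ^ 3) := by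
  have hpi := Real.pi_pos
  rw [isBigO_iff]
  refine ⟨(θ * π) ^ 2, ?_⟩
  filter_upwards [eventually_ge_atTop 4] with N hN
  have hN4 : (4:ℝ) ≤ N := by exact_mod_cast hN
  have hN0 : (0:ℝ) < N := by linarith
  set x : ℝ := θ * π / N with hxdef
  have hxpos : 0 < x := by positivity
  have hx1 : x ≤ 1 := by
    rw [hxdef, div_le_one hN0]
    nlinarith [Real.pi_le_four]
  have hsin3 : 3 * x / 4 < Real.sin x := by
    have := Real.sin_gt_sub_cube hxpos
    nlinarith [pow_le_one₀ hxpos.le hx1 (n := 2), pow_pos hxpos 3, sq_nonneg x]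
  have hsxpos : 0 < Real.sin x := by linarith
  have harg : (2 * (N:ℝ) + 1) * θ * π / N = 2 * π * θ + x := by
    rw [hxdef]; field_simp
  have hid :
      (1 + 1 / (2 * (N : ℝ))
        - Real.sin ((2 * (N : ℝ) + 1) * θ * π / N) / (2 * (N : ℝ) * Real.sin (θ * π / N)))
      - (1 - Real.sin (2 * π * θ) / (2 * π * θ)
          + (1 - Real.cos (2 * π * θ)) / (2 * (N : ℝ))
          + π * θ * Real.sin (2 * π * θ) / (6 * (N : ℝ) ^ 2))
      = -(Real.sin (2 * π * θ) / (2 * π * θ))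
          * ((x * Real.cos x - (1 - x ^ 2 / 3) * Real.sin x) / Real.sin x) := by
    rw [harg, Real.sin_add, hxdef]
    have hsx : Real.sin (θ * π / N) ≠ 0 := by rw [← hxdef]; exact hsxpos.ne'
    generalize Real.sin (θ * π / N) = s at hsx ⊢
    generalize Real.cos (θ * π / N) = c
    field_simp
    ring
  rw [← hxdef] at hid
  simp only [hid, Real.norm_eq_abs]
  have hg := keyA x hxpos hx1
  have habs1 : |Real.sin (2 * π * θ)| ≤ 1 := Real.abs_sin_le_one _
  have hq : |(x * Real.cos x - (1 - x ^ 2 / 3) * Real.sin x) / Real.sin x|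
      ≤ x ^ 4 / (3 * x / 4) := by
    rw [abs_div, abs_of_pos hsxpos]
    exact div_le_div₀ (by positivity) hg (by positivity) hsin3.le
  have hx4 : x ^ 4 / (3 * x / 4) = 4 / 3 * x ^ 3 := by
    field_simp
  have hx3 : x ^ 3 = (θ * π) ^ 3 / (N:ℝ) ^ 3 := by
    rw [hxdef, div_pow]
  rw [abs_mul, abs_neg, abs_div]
  have h2pt : |2 * π * θ| = 2 * π * θ := abs_of_pos (by positivity)
  rw [h2pt]
  have hleft : |Real.sin (2 * π * θ)| / (2 * π * θ) ≤ 1 / (2 * π * θ) :=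
    div_le_div_of_nonneg_right habs1 (by positivity) |>.trans_eq rfl
  have hfinal : |Real.sin (2 * π * θ)| / (2 * π * θ)
      * |(x * Real.cos x - (1 - x ^ 2 / 3) * Real.sin x) / Real.sin x|
      ≤ (1 / (2 * π * θ)) * (4 / 3 * x ^ 3) := by
    apply mul_le_mul hleft (hq.trans_eq hx4) (abs_nonneg _) (by positivity)
  refine hfinal.trans ?_
  rw [hx3, abs_of_pos (by positivity : (0:ℝ) < 1 / (N:ℝ) ^ 3)]
  have e : 1 / (2 * π * θ) * (4 / 3 * ((θ * π) ^ 3 / (N:ℝ) ^ 3))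
      = 2 / 3 * ((θ * π) ^ 2 * (1 / (N:ℝ) ^ 3)) := by
    field_simp
    ring
  rw [e]
  have hpos : 0 ≤ (θ * π) ^ 2 * (1 / (N:ℝ) ^ 3) := by positivity
  linarith
end

section
/- Let S be a set of positive integers whose counting function N_S(X) = #{d ∈ S : d ≤ X} satisfies N_S(X) = cX + O(X^{1/2}) for some constant c > 0, let A > 0 be a real constant, and fix τ ∈ ℝ. For X large enough that R := log(A·X) > 0, one has Σ_{d ∈ S, d ≤ X} (A·d)^{−2πiτ/R} = N_S(X)·(1 − 2πiτ/R)^{−1}·e^{−2πiτ} + O(X^{1/2}) as X → ∞, with implied constant allowed to depend on τ, A, and S. -/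
open Real Filter Asymptotics Complex

open MeasureTheory

set_option maxHeartbeats 2000000 in
lemma key_est (S : Set ℕ) [DecidablePred (· ∈ S)] (hS0 : 0 ∉ S)
    (c₀ : ℝ) (A : ℝ) (hA : 0 < A) (τ : ℝ)
    (C : ℝ) (hC : 0 ≤ C)
    (hcnt : ∀ n : ℕ, |((((Finset.Icc 1 n).filter (· ∈ S)).card : ℝ) - c₀ * n)| ≤ C * (n:ℝ) ^ ((1:ℝ)/2))
    (X : ℕ) (hX1 : 1 ≤ X) (hR : 1 ≤ Real.log (A * X)) :
    ‖(∑ d ∈ (Finset.Icc 1 X).filter (· ∈ S),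
          ((A * (d : ℝ) : ℝ) : ℂ)
            ^ (-(2 * (π : ℂ) * Complex.I * (τ : ℂ)) / ((Real.log (A * X) : ℝ) : ℂ)))
        - (((Finset.Icc 1 X).filter (· ∈ S)).card : ℂ)
            * (1 - 2 * (π : ℂ) * Complex.I * (τ : ℂ) / ((Real.log (A * X) : ℝ) : ℂ))⁻¹
            * Complex.exp (-(2 * (π : ℂ) * Complex.I * (τ : ℂ)))‖
      ≤ (2 * π * |τ| * (3 * C + 3 * |c₀|)) * (X:ℝ) ^ ((1:ℝ)/2) := by
  have hXR : (1:ℝ) ≤ (X:ℝ) := by exact_mod_cast hX1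
  have hXh1 : (1:ℝ) ≤ (X:ℝ) ^ ((1:ℝ)/2) :=
    calc (1:ℝ) = 1 ^ ((1:ℝ)/2) := (Real.one_rpow _).symm
    _ ≤ (X:ℝ) ^ ((1:ℝ)/2) := Real.rpow_le_rpow zero_le_one hXR (by norm_num)
  set R := Real.log (A * X) with hRdef
  have hR0 : (0:ℝ) < R := lt_of_lt_of_le one_pos hR
  have hRne : (R:ℂ) ≠ 0 := by exact_mod_cast (ne_of_gt hR0)
  set s : ℂ := -(2 * (π:ℂ) * Complex.I * (τ:ℂ)) / (R:ℂ) with hs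
  set B := 2*π*|τ| with hB
  have hB0 : 0 ≤ B := by positivity
  -- basic facts about s
  have hs_im : s = ((-(2*π*τ)/R : ℝ) : ℂ) * Complex.I := by
    rw [hs]; push_cast; ring
  have hfabs : ∀ L : ℝ, ‖Complex.exp ((L:ℂ) * s)‖ = 1 := by
    intro L
    rw [hs_im, Complex.norm_exp]
    simp [Complex.mul_re]
  have hs_abs : ‖s‖ ≤ B := by
    rw [hs, norm_div, norm_neg]
    have h1 : ‖2*(π:ℂ)*Complex.I*(τ:ℂ)‖ = 2*π*|τ| := by
      simp [norm_mul, Complex.norm_real, abs_of_pos Real.pi_pos]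
    have h2 : ‖(R:ℂ)‖ = R := by
      rw [Complex.norm_real, Real.norm_eq_abs, abs_of_pos hR0]
    rw [h1, h2, div_le_iff₀ hR0, hB]
    nlinarith [mul_nonneg (mul_nonneg (by norm_num : (0:ℝ) ≤ 2) Real.pi_pos.le) (abs_nonneg τ)]
  have hre : ((1:ℂ)+s).re = 1 := by rw [hs_im]; simp
  have h1s : 1 ≤ ‖(1:ℂ)+s‖ := by
    calc (1:ℝ) = |((1:ℂ)+s).re| := by rw [hre]; norm_num
    _ ≤ ‖(1:ℂ)+s‖ := Complex.abs_re_le_norm _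
  have h1sne : (1:ℂ)+s ≠ 0 := by
    intro h; rw [h] at h1s; simp at h1s; linarith
  have hinv : ‖((1:ℂ)+s)⁻¹‖ ≤ 1 := by
    rw [norm_inv, inv_le_one_iff₀]; right; exact h1s
  -- the function f and its derivative
  set f : ℝ → ℂ := fun u => Complex.exp (((Real.log (A*u) : ℝ):ℂ) * s) with hf
  have hfabs' : ∀ u : ℝ, ‖f u‖ = 1 := fun u => hfabs _
  have hder : ∀ t : ℝ, 0 < t → HasDerivAt f (f t * ((t:ℂ))⁻¹ * s) t := by
    intro t ht
    have h1 : HasDerivAt (fun u : ℝ => A * u) A t := by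
      simpa using (hasDerivAt_id t).const_mul A
    have h2 : HasDerivAt (fun u : ℝ => Real.log (A*u)) t⁻¹ t := by
      have := (Real.hasDerivAt_log (ne_of_gt (mul_pos hA ht))).comp t h1
      rw [show t⁻¹ = (A*t)⁻¹ * A by rw [mul_inv, mul_comm A⁻¹, mul_assoc, inv_mul_cancel₀ hA.ne', mul_one]]
      exact this
    have h4 := ((h2.ofReal_comp).mul_const s).cexp
    convert h4 using 1
    push_cast; ring
  have hderiv_eq : ∀ t : ℝ, 0 < t → deriv f t = f t * ((t:ℂ))⁻¹ * s :=
    fun t ht => (hder t ht).deriv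
  -- continuity of the explicit derivative on [1, X]
  have hcontf : ContinuousOn f (Set.Ici (1:ℝ)) := by
    apply Continuous.comp_continuousOn Complex.continuous_exp
    apply ContinuousOn.mul _ continuousOn_const
    apply Continuous.comp_continuousOn Complex.continuous_ofReal
    apply ContinuousOn.log ((continuous_const.mul continuous_id).continuousOn)
    intro t ht
    exact ne_of_gt (mul_pos hA (lt_of_lt_of_le one_pos ht))
  have hcontd : ContinuousOn (deriv f) (Set.Ici (1:ℝ)) := by
    apply ContinuousOn.congr (g := deriv f)
      (f := fun t : ℝ => f t * ((t:ℂ))⁻¹ * s)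
    · apply ContinuousOn.mul _ continuousOn_const
      apply hcontf.mul
      apply ContinuousOn.inv₀ (Complex.continuous_ofReal.continuousOn)
      intro t ht
      exact_mod_cast ne_of_gt (lt_of_lt_of_le one_pos ht)
    · intro t ht
      exact hderiv_eq t (lt_of_lt_of_le one_pos ht)
  have hf_diff : ∀ t ∈ Set.Icc (1:ℝ) (X:ℝ), DifferentiableAt ℝ f t :=
    fun t ht => (hder t (lt_of_lt_of_le one_pos ht.1)).differentiableAt
  have hf_int : IntegrableOn (deriv f) (Set.Icc (1:ℝ) (X:ℝ)) := by
    exact (hcontd.mono (Set.Icc_subset_Ici_self)).integrableOn_Icc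
  -- counting function
  set N : ℕ → ℕ := fun n => ((Finset.Icc 1 n).filter (· ∈ S)).card with hN
  set cf : ℕ → ℂ := fun n => if n ∈ S then 1 else 0 with hcf
  have hcf0 : cf 0 = 0 := by simp [hcf, hS0]
  have hfilter : ∀ n : ℕ, (Finset.Icc 0 n).filter (· ∈ S) = (Finset.Icc 1 n).filter (· ∈ S) := by
    intro n
    ext k
    simp only [Finset.mem_filter, Finset.mem_Icc]
    constructor
    · rintro ⟨⟨-, h2⟩, hk⟩
      refine ⟨⟨?_, h2⟩, hk⟩
      rcases Nat.eq_zero_or_pos k with rfl | h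
      · exact absurd hk hS0
      · exact h
    · rintro ⟨⟨-, h2⟩, hk⟩
      exact ⟨⟨Nat.zero_le _, h2⟩, hk⟩
  have hsumc : ∀ n : ℕ, ∑ k ∈ Finset.Icc 0 n, cf k = ((N n : ℝ) : ℂ) := by
    intro n
    calc ∑ k ∈ Finset.Icc 0 n, cf k
        = ∑ k ∈ (Finset.Icc 0 n).filter (· ∈ S), (1:ℂ) := (Finset.sum_filter _ _).symm
      _ = ((N n : ℝ) : ℂ) := by rw [hfilter n, Finset.sum_const]; simp [hN]
  -- Abel summation
  have hAbel := sum_mul_eq_sub_integral_mul₀ (c := cf) hcf0 (X : ℝ)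
      hf_diff hf_int
  rw [Nat.floor_natCast] at hAbel
  simp only [hsumc] at hAbel
  -- identify the summands with f
  have hfd : ∀ d : ℕ, 1 ≤ d →
      ((A * (d:ℝ) : ℝ) : ℂ) ^ s = f (d:ℝ) := by
    intro d hd
    have h0 : (0:ℝ) < A * d := mul_pos hA (by exact_mod_cast hd)
    rw [Complex.cpow_def_of_ne_zero (by exact_mod_cast ne_of_gt h0),
      ← Complex.ofReal_log h0.le]
  have sumeq : ∑ d ∈ (Finset.Icc 1 X).filter (· ∈ S), ((A * (d:ℝ) : ℝ) : ℂ) ^ s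
      = ∑ k ∈ Finset.Icc 0 X, f (k:ℝ) * cf k := by
    rw [← hfilter X, Finset.sum_filter]
    apply Finset.sum_congr rfl
    intro k _
    by_cases hkS : k ∈ S
    · simp only [hcf, hkS, if_true, mul_one]
      exact hfd k (Nat.one_le_iff_ne_zero.mpr (fun h => hS0 (h ▸ hkS)))
    · simp [hcf, hkS]
  -- the exponential is f X
  have hexp : Complex.exp (-(2 * (π:ℂ) * Complex.I * (τ:ℂ))) = f ((X:ℕ):ℝ) := by
    show _ = Complex.exp (((Real.log (A*((X:ℕ):ℝ)) : ℝ):ℂ) * s)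
    congr 1
    rw [hs, ← hRdef]
    field_simp
  have h1ms : (1:ℂ) - 2 * (π:ℂ) * Complex.I * (τ:ℂ) / (R:ℂ) = 1 + s := by
    rw [hs]; ring
  -- integrability facts
  have hintD : IntegrableOn (deriv f) (Set.Ioc (1:ℝ) (X:ℝ)) :=
    hf_int.mono_set Set.Ioc_subset_Icc_self
  have hmeasN : AEStronglyMeasurable (fun t : ℝ => ((N ⌊t⌋₊ : ℝ) : ℂ))
      (volume.restrict (Set.Ioc (1:ℝ) (X:ℝ))) :=
    ((measurable_from_top (f := fun n : ℕ => ((N n : ℝ) : ℂ))).comp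
      Nat.measurable_floor).aestronglyMeasurable
  have hbddN : ∀ᵐ t ∂(volume.restrict (Set.Ioc (1:ℝ) (X:ℝ))),
      ‖((N ⌊t⌋₊ : ℝ) : ℂ)‖ ≤ (N X : ℝ) := by
    rw [ae_restrict_iff' measurableSet_Ioc]
    filter_upwards with t ht
    have h1 : ⌊t⌋₊ ≤ X := by
      have := Nat.floor_le_floor ht.2
      rwa [Nat.floor_natCast] at this
    have hmono : N ⌊t⌋₊ ≤ N X :=
      Finset.card_le_card (Finset.filter_subset_filter _ (Finset.Icc_subset_Icc_right h1))
    have hnn : ‖((N ⌊t⌋₊ : ℝ) : ℂ)‖ = ((N ⌊t⌋₊ : ℝ)) := by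
      simp
    rw [hnn]
    exact_mod_cast hmono
  have hintN : IntegrableOn (fun t => deriv f t * ((N ⌊t⌋₊ : ℝ) : ℂ))
      (Set.Ioc (1:ℝ) (X:ℝ)) := by
    have := Integrable.bdd_mul hintD hmeasN hbddN
    exact this.congr (Filter.Eventually.of_forall fun t => mul_comm _ _)
  have hintJ : IntegrableOn (fun t : ℝ => deriv f t * ((c₀:ℂ) * (t:ℂ)))
      (Set.Ioc (1:ℝ) (X:ℝ)) := by
    apply IntegrableOn.mono_set _ Set.Ioc_subset_Icc_self
    apply ContinuousOn.integrableOn_Icc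
    exact (hcontd.mono Set.Icc_subset_Ici_self).mul
      (continuous_const.mul Complex.continuous_ofReal).continuousOn
  -- value of the main integral J
  have hG : ∀ t : ℝ, 0 < t →
      HasDerivAt (fun u : ℝ => ((u:ℝ):ℂ) * f u * ((1:ℂ)+s)⁻¹) (f t) t := by
    intro t ht
    have hid : HasDerivAt (fun u : ℝ => ((u:ℝ):ℂ)) 1 t := by
      simpa using (hasDerivAt_id t).ofReal_comp
    have h5 := (hid.mul (hder t ht)).mul_const ((1:ℂ)+s)⁻¹
    refine h5.congr_deriv ?_
    have htne : ((t:ℝ):ℂ) ≠ 0 := by exact_mod_cast ne_of_gt ht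
    field_simp
  have hfint_ioc : ∫ t in Set.Ioc (1:ℝ) (X:ℝ), f t
      = ((X:ℝ):ℂ) * f (X:ℝ) * ((1:ℂ)+s)⁻¹ - ((1:ℝ):ℂ) * f 1 * ((1:ℂ)+s)⁻¹ := by
    rw [← intervalIntegral.integral_of_le hXR]
    have hd : ∀ t ∈ Set.uIcc (1:ℝ) (X:ℝ),
        HasDerivAt (fun u : ℝ => ((u:ℝ):ℂ) * f u * ((1:ℂ)+s)⁻¹) (f t) t := by
      intro t ht
      rw [Set.uIcc_of_le hXR] at ht
      exact hG t (lt_of_lt_of_le one_pos ht.1)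
    have hi : IntervalIntegrable f volume 1 (X:ℝ) := by
      apply ContinuousOn.intervalIntegrable
      rw [Set.uIcc_of_le hXR]
      exact hcontf.mono Set.Icc_subset_Ici_self
    exact intervalIntegral.integral_eq_sub_of_hasDerivAt hd hi
  have hJ : ∫ t in Set.Ioc (1:ℝ) (X:ℝ), deriv f t * ((c₀:ℂ) * (t:ℂ))
      = (c₀:ℂ) * s * (((X:ℝ):ℂ) * f (X:ℝ) * ((1:ℂ)+s)⁻¹ - ((1:ℝ):ℂ) * f 1 * ((1:ℂ)+s)⁻¹) := by
    rw [← hfint_ioc, ← MeasureTheory.integral_const_mul]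
    apply setIntegral_congr_fun measurableSet_Ioc
    intro t ht
    have ht0 : (0:ℝ) < t := lt_trans one_pos ht.1
    show deriv f t * ((c₀:ℂ) * (t:ℂ)) = (c₀:ℂ) * s * f t
    rw [hderiv_eq t ht0]
    have htne : ((t:ℝ):ℂ) ≠ 0 := by exact_mod_cast ne_of_gt ht0
    field_simp
  -- error bound on the difference of integrals
  have hNabs : ∀ t ∈ Set.Ioc (1:ℝ) (X:ℝ),
      ‖((N ⌊t⌋₊ : ℝ) : ℂ) - (c₀:ℂ) * (t:ℂ)‖ ≤ (C + |c₀|) * t ^ ((1:ℝ)/2) := by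
    intro t ht
    have ht1 : (1:ℝ) ≤ t := le_of_lt ht.1
    have ht0 : (0:ℝ) < t := lt_of_lt_of_le one_pos ht1
    have hth1 : (1:ℝ) ≤ t ^ ((1:ℝ)/2) :=
      calc (1:ℝ) = 1 ^ ((1:ℝ)/2) := (Real.one_rpow _).symm
      _ ≤ t ^ ((1:ℝ)/2) := Real.rpow_le_rpow zero_le_one ht1 (by norm_num)
    set n := ⌊t⌋₊ with hn
    have hnt : (n:ℝ) ≤ t := Nat.floor_le ht0.le
    have htn : t < (n:ℝ) + 1 := Nat.lt_floor_add_one t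
    have heq : ((N n : ℝ) : ℂ) - (c₀:ℂ) * (t:ℂ) = (((N n : ℝ) - c₀ * t : ℝ) : ℂ) := by
      push_cast; ring
    rw [heq, Complex.norm_real, Real.norm_eq_abs]
    have h1 : |(N n : ℝ) - c₀ * n| ≤ C * (n:ℝ) ^ ((1:ℝ)/2) := hcnt n
    have h2 : (n:ℝ) ^ ((1:ℝ)/2) ≤ t ^ ((1:ℝ)/2) :=
      Real.rpow_le_rpow (Nat.cast_nonneg n) hnt (by norm_num)
    have h3 : |c₀ * n - c₀ * t| ≤ |c₀| := by
      rw [← mul_sub, abs_mul]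
      have : |(n:ℝ) - t| ≤ 1 := by rw [abs_le]; constructor <;> linarith
      nlinarith [abs_nonneg c₀]
    calc |(N n : ℝ) - c₀ * t| ≤ |(N n : ℝ) - c₀ * n| + |c₀ * n - c₀ * t| := by
          have := abs_sub_abs_le_abs_sub ((N n : ℝ) - c₀ * n) (c₀ * t - c₀ * n)
          calc |(N n : ℝ) - c₀ * t| = |((N n : ℝ) - c₀ * n) - (c₀ * t - c₀ * n)| := by ring_nf
          _ ≤ |(N n : ℝ) - c₀ * n| + |c₀ * t - c₀ * n| := abs_sub _ _
          _ = |(N n : ℝ) - c₀ * n| + |c₀ * n - c₀ * t| := by rw [abs_sub_comm (c₀*t)]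
      _ ≤ C * (n:ℝ) ^ ((1:ℝ)/2) + |c₀| := add_le_add h1 h3
      _ ≤ C * t ^ ((1:ℝ)/2) + |c₀| * t ^ ((1:ℝ)/2) := by
          have := mul_le_mul_of_nonneg_left h2 hC
          nlinarith [abs_nonneg c₀]
      _ = (C + |c₀|) * t ^ ((1:ℝ)/2) := by ring
  set K := B * (C + |c₀|) with hKdef
  have hK0 : 0 ≤ K := by positivity
  set I := ∫ t in Set.Ioc (1:ℝ) (X:ℝ), deriv f t * ((N ⌊t⌋₊ : ℝ) : ℂ) with hIdef
  set J := ∫ t in Set.Ioc (1:ℝ) (X:ℝ), deriv f t * ((c₀:ℂ) * (t:ℂ)) with hJdef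
  have hdiff_bound : ‖I - J‖ ≤ 2 * K * (X:ℝ) ^ ((1:ℝ)/2) := by
    rw [hIdef, hJdef, ← MeasureTheory.integral_sub hintN hintJ]
    have hb_int : IntegrableOn (fun t : ℝ => K * t ^ (-(1:ℝ)/2)) (Set.Ioc (1:ℝ) (X:ℝ)) := by
      apply IntegrableOn.mono_set _ Set.Ioc_subset_Icc_self
      apply ContinuousOn.integrableOn_Icc
      apply continuousOn_const.mul
      apply ContinuousOn.rpow_const continuousOn_id
      intro t ht
      exact Or.inl (ne_of_gt (lt_of_lt_of_le one_pos ht.1))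
    have hae : ∀ᵐ t ∂(volume.restrict (Set.Ioc (1:ℝ) (X:ℝ))),
        ‖deriv f t * ((N ⌊t⌋₊ : ℝ) : ℂ) - deriv f t * ((c₀:ℂ) * (t:ℂ))‖
          ≤ K * t ^ (-(1:ℝ)/2) := by
      rw [ae_restrict_iff' measurableSet_Ioc]
      filter_upwards with t ht
      have ht1 : (1:ℝ) ≤ t := le_of_lt ht.1
      have ht0 : (0:ℝ) < t := lt_of_lt_of_le one_pos ht1
      rw [← mul_sub, norm_mul, hderiv_eq t ht0]
      have hnd : ‖f t * ((t:ℂ))⁻¹ * s‖ ≤ t⁻¹ * B := by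
        rw [norm_mul, norm_mul, hfabs', one_mul, norm_inv, Complex.norm_real,
          Real.norm_eq_abs, abs_of_pos ht0]
        exact mul_le_mul_of_nonneg_left hs_abs (by positivity)
      have hrpow : t ^ (-(1:ℝ)/2) = t⁻¹ * t ^ ((1:ℝ)/2) := by
        rw [show -(1:ℝ)/2 = -1 + 1/2 by norm_num, Real.rpow_add ht0, Real.rpow_neg_one]
      calc ‖f t * ((t:ℂ))⁻¹ * s‖ * ‖((N ⌊t⌋₊ : ℝ) : ℂ) - (c₀:ℂ) * (t:ℂ)‖
          ≤ (t⁻¹ * B) * ((C + |c₀|) * t ^ ((1:ℝ)/2)) := by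
            apply mul_le_mul hnd (hNabs t ht) (norm_nonneg _) (by positivity)
        _ = K * t ^ (-(1:ℝ)/2) := by rw [hrpow, hKdef]; ring
    calc ‖∫ t in Set.Ioc (1:ℝ) (X:ℝ),
          (deriv f t * ((N ⌊t⌋₊ : ℝ) : ℂ) - deriv f t * ((c₀:ℂ) * (t:ℂ)))‖
        ≤ ∫ t in Set.Ioc (1:ℝ) (X:ℝ), K * t ^ (-(1:ℝ)/2) :=
          MeasureTheory.norm_integral_le_of_norm_le hb_int hae
      _ = K * ∫ t in (1:ℝ)..(X:ℝ), t ^ (-(1:ℝ)/2) := by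
          rw [← intervalIntegral.integral_of_le hXR, intervalIntegral.integral_const_mul]
      _ = K * (((X:ℝ) ^ ((1:ℝ)/2) - 1) / (1/2)) := by
          rw [integral_rpow (Or.inl (by norm_num))]
          norm_num
      _ = K * (2 * (X:ℝ) ^ ((1:ℝ)/2) - 2) := by ring
      _ ≤ 2 * K * (X:ℝ) ^ ((1:ℝ)/2) := by nlinarith [hXh1, hK0]
  -- put everything together
  have hcast : ((((Finset.Icc 1 X).filter (· ∈ S)).card : ℕ) : ℂ) = ((N X : ℝ) : ℂ) := by
    simp only [hN]
    rw [Complex.ofReal_natCast]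
  have hmain : (∑ d ∈ (Finset.Icc 1 X).filter (· ∈ S), ((A * (d:ℝ) : ℝ) : ℂ) ^ s)
      - ((((Finset.Icc 1 X).filter (· ∈ S)).card : ℕ) : ℂ)
          * ((1:ℂ) - 2 * (π:ℂ) * Complex.I * (τ:ℂ) / (R:ℂ))⁻¹
          * Complex.exp (-(2 * (π:ℂ) * Complex.I * (τ:ℂ)))
      = f ((X:ℕ):ℝ) * s * ((1:ℂ)+s)⁻¹ * (((N X : ℝ):ℂ) - (c₀:ℂ) * ((X:ℝ):ℂ))
        + (c₀:ℂ) * s * ((1:ℂ)+s)⁻¹ * f 1 - (I - J) := by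
    rw [sumeq, hAbel, h1ms, hexp, hcast, hJ]
    field_simp
    push_cast; ring
  rw [hmain]
  have t1 : ‖f ((X:ℕ):ℝ) * s * ((1:ℂ)+s)⁻¹ * (((N X : ℝ):ℂ) - (c₀:ℂ) * ((X:ℝ):ℂ))‖
      ≤ B * (C * (X:ℝ) ^ ((1:ℝ)/2)) := by
    rw [norm_mul, norm_mul, norm_mul, hfabs', one_mul]
    have hNX : ‖((N X : ℝ):ℂ) - (c₀:ℂ) * ((X:ℝ):ℂ)‖ ≤ C * (X:ℝ) ^ ((1:ℝ)/2) := by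
      rw [show ((N X : ℝ):ℂ) - (c₀:ℂ) * ((X:ℝ):ℂ) = (((N X : ℝ) - c₀ * (X:ℝ) : ℝ):ℂ) by
        push_cast; ring, Complex.norm_real, Real.norm_eq_abs]
      exact hcnt X
    calc ‖s‖ * ‖((1:ℂ)+s)⁻¹‖ * ‖((N X : ℝ):ℂ) - (c₀:ℂ) * ((X:ℝ):ℂ)‖
        ≤ (B * 1) * (C * (X:ℝ) ^ ((1:ℝ)/2)) :=
          mul_le_mul (mul_le_mul hs_abs hinv (norm_nonneg _) hB0) hNX
            (norm_nonneg _) (by positivity)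
      _ = B * (C * (X:ℝ) ^ ((1:ℝ)/2)) := by ring
  have t2 : ‖(c₀:ℂ) * s * ((1:ℂ)+s)⁻¹ * f 1‖ ≤ |c₀| * B := by
    rw [norm_mul, norm_mul, norm_mul, hfabs', mul_one, Complex.norm_real, Real.norm_eq_abs]
    calc |c₀| * ‖s‖ * ‖((1:ℂ)+s)⁻¹‖ ≤ |c₀| * B * 1 :=
          mul_le_mul (mul_le_mul_of_nonneg_left hs_abs (abs_nonneg c₀)) hinv
            (norm_nonneg _) (by positivity)
      _ = |c₀| * B := by ring
  calc ‖f ((X:ℕ):ℝ) * s * ((1:ℂ)+s)⁻¹ * (((N X : ℝ):ℂ) - (c₀:ℂ) * ((X:ℝ):ℂ))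
        + (c₀:ℂ) * s * ((1:ℂ)+s)⁻¹ * f 1 - (I - J)‖
      ≤ ‖f ((X:ℕ):ℝ) * s * ((1:ℂ)+s)⁻¹ * (((N X : ℝ):ℂ) - (c₀:ℂ) * ((X:ℝ):ℂ))
        + (c₀:ℂ) * s * ((1:ℂ)+s)⁻¹ * f 1‖ + ‖I - J‖ := norm_sub_le _ _
    _ ≤ ‖f ((X:ℕ):ℝ) * s * ((1:ℂ)+s)⁻¹ * (((N X : ℝ):ℂ) - (c₀:ℂ) * ((X:ℝ):ℂ))‖
        + ‖(c₀:ℂ) * s * ((1:ℂ)+s)⁻¹ * f 1‖ + ‖I - J‖ := by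
          have := norm_add_le (f ((X:ℕ):ℝ) * s * ((1:ℂ)+s)⁻¹ * (((N X : ℝ):ℂ) - (c₀:ℂ) * ((X:ℝ):ℂ)))
            ((c₀:ℂ) * s * ((1:ℂ)+s)⁻¹ * f 1)
          linarith
    _ ≤ B * (C * (X:ℝ) ^ ((1:ℝ)/2)) + |c₀| * B + 2 * K * (X:ℝ) ^ ((1:ℝ)/2) := by
          have := hdiff_bound
          linarith [t1, t2]
    _ ≤ 2 * π * |τ| * (3 * C + 3 * |c₀|) * (X:ℝ) ^ ((1:ℝ)/2) := by
          rw [hKdef, show (2:ℝ) * π * |τ| = B from hB.symm]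
          nlinarith [hXh1, hC, abs_nonneg c₀, hB0,
            mul_nonneg (mul_nonneg (sub_nonneg.mpr hXh1) hB0) (abs_nonneg c₀),
            mul_nonneg (mul_nonneg (sub_nonneg.mpr hXh1) hB0) hC]

/-- Summation by parts: if `#{d ∈ S : d ≤ X} = cX + O(X^{1/2})`, then for
`R = log (A X)`,
`∑_{d ∈ S, d ≤ X} (A d)^{-2πiτ/R} = N_S(X) (1 - 2πiτ/R)⁻¹ e^{-2πiτ} + O(X^{1/2})`. -/
theorem sum_power_over_family (S : Set ℕ) [DecidablePred (· ∈ S)] (hS0 : 0 ∉ S)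
    (c : ℝ) (hc : 0 < c)
    (hcount : (fun X : ℕ =>
        ((((Finset.Icc 1 X).filter (· ∈ S)).card : ℝ) - c * X))
      =O[atTop] (fun X : ℕ => (X : ℝ) ^ ((1 : ℝ) / 2)))
    (A : ℝ) (hA : 0 < A) (τ : ℝ) :
    (fun X : ℕ =>
      (∑ d ∈ (Finset.Icc 1 X).filter (· ∈ S),
          ((A * (d : ℝ) : ℝ) : ℂ)
            ^ (-(2 * (π : ℂ) * Complex.I * (τ : ℂ)) / ((Real.log (A * X) : ℝ) : ℂ)))
        - (((Finset.Icc 1 X).filter (· ∈ S)).card : ℂ)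
            * (1 - 2 * (π : ℂ) * Complex.I * (τ : ℂ) / ((Real.log (A * X) : ℝ) : ℂ))⁻¹
            * Complex.exp (-(2 * (π : ℂ) * Complex.I * (τ : ℂ))))
      =O[atTop] (fun X : ℕ => (X : ℝ) ^ ((1 : ℝ) / 2)) := by
  have h0 : ∀ x : ℕ, (x:ℝ) ^ ((1:ℝ)/2) = 0 →
      ((((Finset.Icc 1 x).filter (· ∈ S)).card : ℝ) - c * x) = 0 := by
    intro x hx
    have hx0 : x = 0 := by
      by_contra h
      have hxpos : (0:ℝ) < (x:ℝ) := by exact_mod_cast Nat.pos_of_ne_zero h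
      have := Real.rpow_pos_of_pos hxpos ((1:ℝ)/2)
      rw [hx] at this
      exact lt_irrefl 0 this
    subst hx0
    simp
  obtain ⟨C, hC⟩ := (isBigO_nat_atTop_iff h0).mp hcount
  set C₀ := max C 0 with hC₀def
  have hC₀ : 0 ≤ C₀ := le_max_right _ _
  have hcnt : ∀ n : ℕ, |((((Finset.Icc 1 n).filter (· ∈ S)).card : ℝ) - c * n)|
      ≤ C₀ * (n:ℝ) ^ ((1:ℝ)/2) := by
    intro n
    have h := hC n
    rw [Real.norm_eq_abs, Real.norm_eq_abs,
      _root_.abs_of_nonneg (Real.rpow_nonneg (Nat.cast_nonneg n) _)] at h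
    exact h.trans (mul_le_mul_of_nonneg_right (le_max_left _ _)
      (Real.rpow_nonneg (Nat.cast_nonneg n) _))
  rw [isBigO_iff]
  refine ⟨2 * π * |τ| * (3 * C₀ + 3 * |c|), ?_⟩
  have htend : Tendsto (fun X : ℕ => Real.log (A * (X:ℝ))) atTop atTop :=
    Real.tendsto_log_atTop.comp (tendsto_natCast_atTop_atTop.const_mul_atTop hA)
  filter_upwards [eventually_ge_atTop 1, htend.eventually_ge_atTop 1] with X hX1 hR
  rw [Real.norm_eq_abs, _root_.abs_of_nonneg (Real.rpow_nonneg (Nat.cast_nonneg X) _)]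
  exact key_est S hS0 c A hA τ C₀ hC₀ hcnt X hX1 hR
end

section
/- Let p ≥ 2 be a real number, let a > 0 be real, and let α₀, β₀ ∈ ℂ satisfy a < p^{1 + Re(α₀) + Re(β₀)}. For complex α, β, γ, δ with a < p^{1 + Re(α) + Re(β)}, define W(α, β, γ, δ) := (Σ_{m=0}^{∞} a^m p^{−(1+α+β)m}) · (1 − a·p^{−(1+α+δ)} − a·p^{−(1+β+γ)} + a·p^{−(1+γ+δ)}). Then the mixed partial derivative ∂²W/∂β∂α, taken with γ and δ held fixed and afterwards evaluated at γ = α = α₀ and δ = β = β₀, equals (log p)² / (a^{−1}·p^{1+α₀+β₀} − 1). -/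
open Complex

/-- The ramified local factor computation (equation (5.10)): with
`W(α,β,γ,δ) = (∑_m a^m p^{-(1+α+β)m})(1 - a p^{-(1+α+δ)} - a p^{-(1+β+γ)} + a p^{-(1+γ+δ)})`,
the mixed partial `∂²W/∂β∂α`, with `γ, δ` held fixed and afterwards evaluated at
`γ = α = α₀`, `δ = β = β₀`, equals `(log p)² / (a⁻¹ p^{1+α₀+β₀} - 1)`. -/
theorem ramified_local_factor_mixed_partial (p : ℝ) (hp : 2 ≤ p)
    (a : ℝ) (ha : 0 < a) (α₀ β₀ : ℂ)
    (hconv : a < p ^ (1 + α₀.re + β₀.re))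
    (W : ℂ → ℂ → ℂ → ℂ → ℂ)
    (hW : ∀ α β γ δ : ℂ,
      W α β γ δ =
        (∑' m : ℕ, (a : ℂ) ^ m * ((p : ℂ) ^ (-(1 + α + β))) ^ m)
          * (1 - (a : ℂ) * (p : ℂ) ^ (-(1 + α + δ))
              - (a : ℂ) * (p : ℂ) ^ (-(1 + β + γ))
              + (a : ℂ) * (p : ℂ) ^ (-(1 + γ + δ)))) :
    deriv (fun β : ℂ => deriv (fun α : ℂ => W α β α₀ β₀) α₀) β₀
      = ((Real.log p : ℂ)) ^ 2 / ((a : ℂ)⁻¹ * (p : ℂ) ^ (1 + α₀ + β₀) - 1) := by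
  have hp0 : (0:ℝ) < p := by linarith
  have hp1 : (1:ℝ) < p := by linarith
  have hpc : (p:ℂ) ≠ 0 := by exact_mod_cast hp0.ne'
  have hac : (a:ℂ) ≠ 0 := by exact_mod_cast ha.ne'
  set L : ℂ := (Real.log p : ℂ) with hLdef
  -- cpow as exp
  have hcpow : ∀ z : ℂ, (p:ℂ) ^ z = Complex.exp (Complex.log (p:ℂ) * z) := fun z =>
    Complex.cpow_def_of_ne_zero hpc z
  have hlogp : Complex.log (p:ℂ) = L := (Complex.ofReal_log hp0.le).symm
  have hpz : ∀ z : ℂ, (p:ℂ) ^ z ≠ 0 := fun z => by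
    rw [hcpow]; exact Complex.exp_ne_zero _
  -- derivative lemmas for cpow, variable in middle / last position
  have hd1 : ∀ (c x : ℂ), HasDerivAt (fun z : ℂ => (p:ℂ) ^ (-(1 + z + c)))
      (-L * (p:ℂ) ^ (-(1 + x + c))) x := by
    intro c x
    have h0 : HasDerivAt (fun z : ℂ => Complex.log (p:ℂ) * -(1 + z + c))
        (-(Complex.log (p:ℂ))) x := by
      have : HasDerivAt (fun z : ℂ => -(1 + z + c)) (-1) x := by
        exact (((hasDerivAt_id x).const_add (1:ℂ)).add_const c).neg
      simpa [mul_comm] using (this.const_mul (Complex.log (p:ℂ)))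
    have := h0.cexp
    simp only [← hcpow] at this
    simpa [hlogp, mul_comm] using this
  have hd2 : ∀ (c x : ℂ), HasDerivAt (fun z : ℂ => (p:ℂ) ^ (-(1 + c + z)))
      (-L * (p:ℂ) ^ (-(1 + c + x))) x := by
    intro c x
    have h0 : HasDerivAt (fun z : ℂ => Complex.log (p:ℂ) * -(1 + c + z))
        (-(Complex.log (p:ℂ))) x := by
      have : HasDerivAt (fun z : ℂ => -(1 + c + z)) (-1) x := by
        exact ((hasDerivAt_id x).const_add ((1:ℂ) + c)).neg
      simpa [mul_comm] using (this.const_mul (Complex.log (p:ℂ)))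
    have := h0.cexp
    simp only [← hcpow] at this
    simpa [hlogp, mul_comm] using this
  -- norm bound
  have hnorm : ∀ α β : ℂ, a < p ^ (1 + α.re + β.re) →
      ‖(a:ℂ) * (p:ℂ) ^ (-(1 + α + β))‖ < 1 := by
    intro α β h
    have habs : ‖(p:ℂ) ^ (-(1+α+β))‖ = p ^ (-(1+α.re+β.re)) := by
      rw [Complex.norm_cpow_eq_rpow_re_of_pos hp0]
      norm_num
    rw [norm_mul, Complex.norm_real, Real.norm_of_nonneg ha.le, habs,
      Real.rpow_neg hp0.le, ← div_eq_mul_inv, div_lt_one (Real.rpow_pos_of_pos hp0 _)]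
    exact h
  have hne : ∀ α β : ℂ, a < p ^ (1 + α.re + β.re) →
      (1 : ℂ) - (a:ℂ) * (p:ℂ) ^ (-(1 + α + β)) ≠ 0 := by
    intro α β h heq
    rw [sub_eq_zero] at heq
    have := hnorm α β h
    rw [← heq] at this
    simp at this
  have htsum : ∀ α β : ℂ, a < p ^ (1 + α.re + β.re) →
      (∑' m : ℕ, (a:ℂ)^m * ((p:ℂ)^(-(1+α+β)))^m)
        = (1 - (a:ℂ) * (p:ℂ)^(-(1+α+β)))⁻¹ := by
    intro α β h
    rw [← tsum_geometric_of_norm_lt_one (hnorm α β h)]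
    simp [mul_pow]
  -- eventual conditions
  have hcontp : Continuous fun x : ℝ => p ^ x := by
    have : (fun x : ℝ => p ^ x) = fun x => Real.exp (Real.log p * x) := by
      funext x; rw [Real.rpow_def_of_pos hp0]
    rw [this]; exact Real.continuous_exp.comp (continuous_const.mul continuous_id)
  have hevβ : ∀ᶠ β in nhds β₀, a < p ^ (1 + α₀.re + β.re) := by
    have hc : ContinuousAt (fun w : ℂ => p ^ (1 + α₀.re + w.re)) β₀ :=
      (hcontp.comp ((continuous_const.add Complex.continuous_re))).continuousAt
    exact hc.eventually (eventually_gt_nhds hconv)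
  have hevα : ∀ β : ℂ, a < p ^ (1 + α₀.re + β.re) →
      ∀ᶠ α in nhds α₀, a < p ^ (1 + α.re + β.re) := by
    intro β h
    have hc : ContinuousAt (fun w : ℂ => p ^ (1 + w.re + β.re)) α₀ :=
      (hcontp.comp ((continuous_const.add Complex.continuous_re).add
        continuous_const)).continuousAt
    exact hc.eventually (eventually_gt_nhds h)
  -- abbreviations
  set u : ℂ → ℂ := fun β => (a:ℂ) * (p:ℂ) ^ (-(1 + α₀ + β)) with hu
  have hv : u β₀ = (a:ℂ) * (p:ℂ) ^ (-(1 + α₀ + β₀)) := rfl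
  -- inner derivative
  have hinner : ∀ β : ℂ, a < p ^ (1 + α₀.re + β.re) →
      deriv (fun α : ℂ => W α β α₀ β₀) α₀ = L * ((u β₀ - u β) * (1 - u β)⁻¹) := by
    intro β hβ
    have hQ : deriv (fun α : ℂ => W α β α₀ β₀) α₀ =
        deriv (fun α : ℂ => (1 - (a:ℂ) * (p:ℂ)^(-(1+α+β)))⁻¹ *
          (1 - (a:ℂ) * (p:ℂ) ^ (-(1 + α + β₀))
            - (a:ℂ) * (p:ℂ) ^ (-(1 + β + α₀))
            + (a:ℂ) * (p:ℂ) ^ (-(1 + α₀ + β₀)))) α₀ := by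
      apply Filter.EventuallyEq.deriv_eq
      filter_upwards [hevα β hβ] with α hα
      rw [hW, htsum α β hα]
    rw [hQ]
    -- compute via HasDerivAt
    have hne1 : (1:ℂ) - (a:ℂ) * (p:ℂ)^(-(1+α₀+β)) ≠ 0 := hne α₀ β hβ
    have hf : HasDerivAt (fun α : ℂ => (1 - (a:ℂ) * (p:ℂ)^(-(1+α+β)))⁻¹)
        (-(-( (a:ℂ) * (-L * (p:ℂ) ^ (-(1+α₀+β))))) / (1 - (a:ℂ) * (p:ℂ)^(-(1+α₀+β)))^2)
        α₀ := (((hd1 β α₀).const_mul (a:ℂ)).const_sub 1).inv hne1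
    have hg : HasDerivAt (fun α : ℂ =>
        (1 - (a:ℂ) * (p:ℂ) ^ (-(1 + α + β₀))
          - (a:ℂ) * (p:ℂ) ^ (-(1 + β + α₀))
          + (a:ℂ) * (p:ℂ) ^ (-(1 + α₀ + β₀))))
        (-((a:ℂ) * (-L * (p:ℂ) ^ (-(1+α₀+β₀))))) α₀ := by
      have := ((((hd1 β₀ α₀).const_mul (a:ℂ)).const_sub 1).sub_const
        ((a:ℂ) * (p:ℂ) ^ (-(1 + β + α₀)))).add_const ((a:ℂ) * (p:ℂ) ^ (-(1 + α₀ + β₀)))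
      simpa using this
    rw [(hf.fun_mul hg).deriv]
    have hbr : (1 - (a:ℂ) * (p:ℂ) ^ (-(1 + α₀ + β₀))
          - (a:ℂ) * (p:ℂ) ^ (-(1 + β + α₀))
          + (a:ℂ) * (p:ℂ) ^ (-(1 + α₀ + β₀))) = 1 - u β := by
      have : (p:ℂ) ^ (-(1 + β + α₀)) = (p:ℂ) ^ (-(1 + α₀ + β)) := by ring_nf
      rw [this]; simp [hu]; ring
    rw [hbr]
    simp only [hu, hv]
    generalize hP : (p:ℂ) ^ (-(1 + α₀ + β)) = P at hne1 ⊢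
    generalize hQ2 : (p:ℂ) ^ (-(1 + α₀ + β₀)) = Q
    field_simp
    ring
  -- outer derivative
  have houter : deriv (fun β : ℂ => deriv (fun α : ℂ => W α β α₀ β₀) α₀) β₀
      = deriv (fun β : ℂ => L * ((u β₀ - u β) * (1 - u β)⁻¹)) β₀ := by
    apply Filter.EventuallyEq.deriv_eq
    filter_upwards [hevβ] with β hβ
    exact hinner β hβ
  rw [houter]
  have hneβ : (1:ℂ) - u β₀ ≠ 0 := hne α₀ β₀ hconv
  have hdu : HasDerivAt u ((a:ℂ) * (-L * (p:ℂ) ^ (-(1 + α₀ + β₀)))) β₀ :=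
    (hd2 α₀ β₀).const_mul (a:ℂ)
  have hG := (((hdu.const_sub (u β₀)).fun_mul ((hdu.const_sub 1).fun_inv hneβ)).const_mul L)
  rw [hG.deriv]
  -- final algebra
  have hvinv : (p:ℂ) ^ (-(1 + α₀ + β₀)) = ((p:ℂ) ^ (1 + α₀ + β₀))⁻¹ := by
    rw [← Complex.cpow_neg]
  have hPne : (p:ℂ) ^ (1 + α₀ + β₀) ≠ 0 := hpz _
  have hvne : (1:ℂ) - (a:ℂ) * ((p:ℂ) ^ (1 + α₀ + β₀))⁻¹ ≠ 0 := by
    rw [← hvinv]; exact hneβ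
  have hden : (a:ℂ)⁻¹ * (p:ℂ) ^ (1 + α₀ + β₀) - 1 ≠ 0 := by
    intro h
    apply hvne
    rw [sub_eq_zero] at h ⊢
    field_simp at h ⊢
    rw [← h]
  simp only [hv, hu, hvinv]
  generalize hQ2 : ((p:ℂ) ^ (1 + α₀ + β₀))⁻¹ = Qi at hvne hden ⊢
  have hQine : (a:ℂ) * Qi ≠ 0 := by
    rw [← hQ2]; exact mul_ne_zero hac (inv_ne_zero hPne)
  have hQPi : (p:ℂ) ^ (1 + α₀ + β₀) = Qi⁻¹ := by rw [← hQ2, inv_inv]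
  rw [hQPi] at hden ⊢
  have hQi0 : Qi ≠ 0 := by
    intro h; rw [h] at hQine; simp at hQine
  field_simp
  ring
end

section
/- Let R > 0 and e₁, e₂ ∈ ℝ with 3e₂ − 4e₁ > 0. For N > 0 define Φ(N) := ∫₀¹ ((e₁ − e₂·sin²(πy))/R² + sin²(πy)/(3N²))² dy. Then Φ attains its unique minimum on (0, ∞) at N* = R/√(3e₂ − 4e₁); that is, Φ(N*) < Φ(N) for every N > 0 with N ≠ N*. -/
open Real

lemma sin_sq_integral : ∫ y in (0:ℝ)..1, sin (π*y)^2 = 1/2 := by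
  rw [intervalIntegral.integral_comp_mul_left (fun x => sin x ^ 2) pi_ne_zero]
  simp [integral_sin_sq]
  field_simp

lemma sin_quart_integral : ∫ y in (0:ℝ)..1, sin (π*y)^4 = 3/8 := by
  rw [intervalIntegral.integral_comp_mul_left (fun x => sin x ^ 4) pi_ne_zero]
  simp only [mul_zero, mul_one]
  rw [show (4:ℕ) = 2+2 from rfl, integral_sin_pow 2, integral_sin_sq]
  simp
  field_simp
  ring

lemma key_integral (a b : ℝ) :
    ∫ y in (0:ℝ)..1, (a + b * sin (π*y)^2)^2 = a^2 + a*b + 3/8*b^2 := by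
  have h1 : IntervalIntegrable (fun y : ℝ => (a^2 : ℝ)) MeasureTheory.volume 0 1 :=
    intervalIntegrable_const
  have h2 : IntervalIntegrable (fun y : ℝ => 2*a*b * sin (π*y)^2) MeasureTheory.volume 0 1 := by
    apply Continuous.intervalIntegrable; fun_prop
  have h3 : IntervalIntegrable (fun y : ℝ => b^2 * sin (π*y)^4) MeasureTheory.volume 0 1 := by
    apply Continuous.intervalIntegrable; fun_prop
  have : ∀ y : ℝ, (a + b * sin (π*y)^2)^2
      = a^2 + (2*a*b * sin (π*y)^2 + b^2 * sin (π*y)^4) := by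
    intro y; ring
  rw [intervalIntegral.integral_congr (g := fun y =>
      a^2 + (2*a*b * sin (π*y)^2 + b^2 * sin (π*y)^4)) (fun y _ => this y)]
  rw [intervalIntegral.integral_add h1 (h2.add h3),
      intervalIntegral.integral_add h2 h3,
      intervalIntegral.integral_const_mul, intervalIntegral.integral_const_mul,
      sin_sq_integral, sin_quart_integral]
  simp
  ring

/-- The `L²`-minimization determining the effective matrix size in the unitary case:
`Φ(N) = ∫₀¹ ((e₁ - e₂ sin²(πy))/R² + sin²(πy)/(3N²))² dy` has its unique minimum
on `(0, ∞)` at `N* = R/√(3e₂ - 4e₁)`. -/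
theorem effective_matrix_size_minimizer (R e₁ e₂ : ℝ) (hR : 0 < R)
    (hpos : 0 < 3 * e₂ - 4 * e₁)
    (Φ : ℝ → ℝ)
    (hΦ : ∀ N : ℝ, Φ N =
      ∫ y in (0:ℝ)..1,
        ((e₁ - e₂ * Real.sin (π * y) ^ 2) / R ^ 2
          + Real.sin (π * y) ^ 2 / (3 * N ^ 2)) ^ 2) :
    ∀ N : ℝ, 0 < N → N ≠ R / Real.sqrt (3 * e₂ - 4 * e₁) →
      Φ (R / Real.sqrt (3 * e₂ - 4 * e₁)) < Φ N := by
  set c := 3 * e₂ - 4 * e₁ with hc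
  set Ns := R / Real.sqrt c with hNs
  have hsq : 0 < Real.sqrt c := Real.sqrt_pos.mpr hpos
  have hNs_pos : 0 < Ns := div_pos hR hsq
  have hR2 : (R:ℝ)^2 ≠ 0 := by positivity
  -- closed form for Φ
  have hform : ∀ N : ℝ, N ≠ 0 → Φ N =
      (e₁/R^2)^2 + (e₁/R^2)*(1/(3*N^2) - e₂/R^2) + 3/8*(1/(3*N^2) - e₂/R^2)^2 := by
    intro N hN
    rw [hΦ N]
    have hN2 : (3:ℝ)*N^2 ≠ 0 := by positivity
    rw [intervalIntegral.integral_congr (g := fun y =>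
        ((e₁/R^2) + (1/(3*N^2) - e₂/R^2) * sin (π*y)^2)^2)
        (fun y _ => by field_simp; ring)]
    exact key_integral _ _
  intro N hN hne
  rw [hform N (ne_of_gt hN), hform Ns (ne_of_gt hNs_pos)]
  set a := e₁/R^2
  have hNs2 : Ns^2 = R^2/c := by
    rw [hNs, div_pow, Real.sq_sqrt hpos.le]
  have hbstar : 1/(3*Ns^2) - e₂/R^2 = -4*a/3 := by
    rw [hNs2]
    have hcne : c ≠ 0 := ne_of_gt hpos
    field_simp [a]
    ring_nf
    have ha : R^2 * a = e₁ := by simp only [a]; field_simp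
    rw [ha, hc]; ring
  rw [hbstar]
  have hkey : 1/(3*N^2) - e₂/R^2 ≠ -4*a/3 := by
    intro h
    apply hne
    have h2 : 1/(3*N^2) = 1/(3*Ns^2) := by linarith [hbstar, h]
    have h3 : N^2 = Ns^2 := by
      have hN2 : (0:ℝ) < 3*N^2 := by positivity
      have hNs2' : (0:ℝ) < 3*Ns^2 := by positivity
      have := (div_eq_div_iff hN2.ne' hNs2'.ne').mp h2
      nlinarith
    calc N = Real.sqrt (N^2) := (Real.sqrt_sq hN.le).symm
      _ = Real.sqrt (Ns^2) := by rw [h3]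
      _ = Ns := Real.sqrt_sq hNs_pos.le
  set b := 1/(3*N^2) - e₂/R^2
  have hdiff : b - (-4*a/3) ≠ 0 := sub_ne_zero.mpr hkey
  nlinarith [sq_pos_of_ne_zero hdiff, sq_nonneg (b + 4*a/3)]
end
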